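/- Let G = ({1,...,n}, E) be a connected undirected graph in which every node is its own neighbor, and let A = [a_ij] be an n×n doubly stochastic matrix such that a_ij > 0 and a_ji > 0 whenever (i,j) ∈ E. Let η = min{ a_ij : a_ij > 0 } be the smallest positive entry of A. If x(t+1) = A x(t) and E(t) = ||x(t) − x̄ 1||₂², then for every t ≥ 0, E(t) ≤ (1 − η/(2n²))^t · E(0). -/

import Mathlib

open Finset

private lemma sum_sq_le_sq' (s : Finset ℕ) (f : ℕ → ℝ) (hf : ∀ i ∈ s, 0 ≤ f i) :
    ∑ i ∈ s, f i ^ 2 ≤ (∑ i ∈ s, f i) ^ 2 := by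
  have h : ∀ i ∈ s, f i ^ 2 ≤ f i * ∑ j ∈ s, f j := by
    intro i hi
    have h1 : f i ≤ ∑ j ∈ s, f j := Finset.single_le_sum hf hi
    have h2 := hf i hi
    nlinarith
  calc ∑ i ∈ s, f i ^ 2 ≤ ∑ i ∈ s, f i * ∑ j ∈ s, f j := Finset.sum_le_sum h
    _ = (∑ i ∈ s, f i) ^ 2 := by rw [← Finset.sum_mul]; ring

private lemma crossing {n : ℕ} {E : Fin n → Fin n → Prop}
    (hconn : ∀ i j, Relation.ReflTransGen E i j)
    (P : Fin n → Prop) (hi : ∃ i, P i) (hj : ∃ j, ¬ P j) :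
    ∃ a b, P a ∧ ¬ P b ∧ E a b := by
  obtain ⟨i, hPi⟩ := hi
  obtain ⟨j, hPj⟩ := hj
  have key : ∀ j, Relation.ReflTransGen E i j → ¬ P j → ∃ a b, P a ∧ ¬ P b ∧ E a b := by
    intro j h
    induction h with
    | refl => intro h0; exact absurd hPi h0
    | @tail b c h' hstep ih =>
      intro hc
      by_cases hb : P b
      · exact ⟨b, c, hb, hc, hstep⟩
      · exact ih hb
  exact key j (hconn i j) hPj

set_option maxHeartbeats 2000000 in
private lemma key_contraction
    (n : ℕ) (hn : 0 < n)
    (E : Fin n → Fin n → Prop)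
    (hE_refl : ∀ i, E i i)
    (hE_conn : ∀ i j, Relation.ReflTransGen E i j)
    (A : Matrix (Fin n) (Fin n) ℝ)
    (hA_nonneg : ∀ i j, 0 ≤ A i j)
    (hA_row : ∀ i, ∑ j, A i j = 1)
    (hA_col : ∀ j, ∑ i, A i j = 1)
    (hA_pos : ∀ i j, E i j → 0 < A i j ∧ 0 < A j i)
    (η : ℝ)
    (hη : IsLeast {a : ℝ | 0 < a ∧ ∃ i j, A i j = a} η)
    (y : Fin n → ℝ) (hy : ∑ i, y i = 0) :
    ∑ k, (A.mulVec y k) ^ 2 ≤ (1 - η / (2 * (n : ℝ) ^ 2)) * ∑ i, y i ^ 2 := by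
  have hη_pos : 0 < η := hη.1.1
  have hη_le : ∀ i j, 0 < A i j → η ≤ A i j := fun i j h => hη.2 ⟨h, i, j, rfl⟩
  -- the matrix M = Aᵀ A
  set M : Fin n → Fin n → ℝ := fun i j => ∑ k, A k i * A k j with hMdef
  have hM_symm : ∀ i j, M i j = M j i := by
    intro i j
    exact Finset.sum_congr rfl (fun k _ => mul_comm _ _)
  have hM_nonneg : ∀ i j, 0 ≤ M i j := by
    intro i j
    exact Finset.sum_nonneg fun k _ => mul_nonneg (hA_nonneg k i) (hA_nonneg k j)
  have hM_row : ∀ i, ∑ j, M i j = 1 := by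
    intro i
    calc ∑ j, M i j = ∑ k, ∑ j, A k i * A k j := Finset.sum_comm
      _ = ∑ k, A k i := by
          refine Finset.sum_congr rfl fun k _ => ?_
          rw [← Finset.mul_sum, hA_row k, mul_one]
      _ = 1 := hA_col i
  have hM_col : ∀ j, ∑ i, M i j = 1 := by
    intro j
    calc ∑ i, M i j = ∑ i, M j i := Finset.sum_congr rfl fun i _ => hM_symm i j
      _ = 1 := hM_row j
  -- ‖Ay‖² = yᵀ M y
  have hAy : ∑ k, (A.mulVec y k) ^ 2 = ∑ i, ∑ j, M i j * y i * y j := by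
    calc ∑ k, (A.mulVec y k) ^ 2
        = ∑ k, ∑ i, ∑ j, (A k i * y i) * (A k j * y j) := by
          refine Finset.sum_congr rfl fun k _ => ?_
          rw [sq]
          simp only [Matrix.mulVec, dotProduct]
          rw [Finset.sum_mul_sum]
      _ = ∑ i, ∑ j, ∑ k, (A k i * y i) * (A k j * y j) := by
          rw [Finset.sum_comm]
          exact Finset.sum_congr rfl fun i _ => Finset.sum_comm
      _ = ∑ i, ∑ j, M i j * y i * y j := by
          refine Finset.sum_congr rfl fun i _ => Finset.sum_congr rfl fun j _ => ?_
          rw [hMdef]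
          rw [Finset.sum_mul, Finset.sum_mul]
          exact Finset.sum_congr rfl fun k _ => by ring
  -- the Dirichlet form identity
  have hD : ∑ i, ∑ j, M i j * (y i - y j) ^ 2
      = 2 * (∑ i, y i ^ 2) - 2 * ∑ i, ∑ j, M i j * y i * y j := by
    have e1 : ∑ i, ∑ j, M i j * y i ^ 2 = ∑ i, y i ^ 2 := by
      refine Finset.sum_congr rfl fun i _ => ?_
      rw [← Finset.sum_mul, hM_row i, one_mul]
    have e2 : ∑ i, ∑ j, M i j * y j ^ 2 = ∑ i, y i ^ 2 := by
      rw [Finset.sum_comm]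
      refine Finset.sum_congr rfl fun j _ => ?_
      rw [← Finset.sum_mul, hM_col j, one_mul]
    calc ∑ i, ∑ j, M i j * (y i - y j) ^ 2
        = ∑ i, ∑ j, (M i j * y i ^ 2 - 2 * (M i j * y i * y j) + M i j * y j ^ 2) := by
          refine Finset.sum_congr rfl fun i _ => Finset.sum_congr rfl fun j _ => by ring
      _ = (∑ i, ∑ j, M i j * y i ^ 2) - 2 * (∑ i, ∑ j, M i j * y i * y j)
            + ∑ i, ∑ j, M i j * y j ^ 2 := by
          simp only [Finset.sum_add_distrib, Finset.sum_sub_distrib, ← Finset.mul_sum]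
      _ = 2 * (∑ i, y i ^ 2) - 2 * ∑ i, ∑ j, M i j * y i * y j := by
          rw [e1, e2]; ring
  -- sorting
  set σ : Equiv.Perm (Fin n) := Tuple.sort y with hσdef
  set w : Fin n → ℝ := y ∘ σ with hwdef
  have hw_mono : Monotone w := Tuple.monotone_sort y
  set μ : Fin n → Fin n → ℝ := fun i j => M (σ i) (σ j) with hμdef
  have hμ_symm : ∀ i j, μ i j = μ j i := fun i j => hM_symm _ _
  have hμ_nonneg : ∀ i j, 0 ≤ μ i j := fun i j => hM_nonneg _ _
  have hwsum : ∑ i, w i = 0 := by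
    rw [hwdef]
    rw [show (∑ i, (y ∘ σ) i) = ∑ i, y (σ i) from rfl, Equiv.sum_comp σ y]
    exact hy
  have hwsq : ∑ i, w i ^ 2 = ∑ i, y i ^ 2 :=
    Equiv.sum_comp σ (fun i => y i ^ 2)
  -- the Dirichlet form in sorted coordinates
  set D : ℝ := ∑ i, ∑ j, μ i j * (w i - w j) ^ 2 with hDdef
  have hDσ : D = ∑ i, ∑ j, M i j * (y i - y j) ^ 2 := by
    rw [hDdef]
    calc ∑ i, ∑ j, μ i j * (w i - w j) ^ 2
        = ∑ i, ∑ j, M (σ i) j * (y (σ i) - y j) ^ 2 :=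
          Finset.sum_congr rfl fun i _ =>
            Equiv.sum_comp σ (fun j => M (σ i) j * (y (σ i) - y j) ^ 2)
      _ = ∑ i, ∑ j, M i j * (y i - y j) ^ 2 :=
          Equiv.sum_comp σ (fun i => ∑ j, M i j * (y i - y j) ^ 2)
  have hD_nonneg : 0 ≤ D :=
    Finset.sum_nonneg fun i _ => Finset.sum_nonneg fun j _ =>
      mul_nonneg (hμ_nonneg i j) (sq_nonneg _)
  -- the clamped vector
  set v : ℕ → ℝ := fun k => w ⟨min k (n-1), by omega⟩ with hvdef
  have hv : ∀ i : Fin n, v (i : ℕ) = w i := by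
    intro i
    have h1 : (⟨min (i:ℕ) (n-1), by omega⟩ : Fin n) = i := by
      apply Fin.ext
      show min (i:ℕ) (n-1) = (i:ℕ)
      have := i.isLt; omega
    show w ⟨min (i:ℕ) (n-1), by omega⟩ = w i
    rw [h1]
  have hv_mono : Monotone v := by
    intro a b hab
    exact hw_mono (by simp [Fin.le_def]; omega)
  have hgap_nonneg : ∀ l : ℕ, 0 ≤ v (l+1) - v l :=
    fun l => sub_nonneg.mpr (hv_mono (Nat.le_succ l))
  set G : ℝ := ∑ l ∈ range (n-1), (v (l+1) - v l) ^ 2 with hGdef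
  have hG_nonneg : 0 ≤ G := Finset.sum_nonneg fun l _ => sq_nonneg _
  -- telescoping
  have htel : ∀ a b : ℕ, a ≤ b → ∑ l ∈ Ico a b, (v (l+1) - v l) = v b - v a := by
    intro a b hab
    rw [Finset.sum_Ico_eq_sub _ hab, Finset.sum_range_sub, Finset.sum_range_sub]
    ring
  -- Step A: pointwise bound
  have stepA : ∀ i j : Fin n,
      ∑ l ∈ range (n-1), (if min (i:ℕ) (j:ℕ) ≤ l ∧ l < max (i:ℕ) (j:ℕ)
        then (v (l+1) - v l) ^ 2 else 0) ≤ (w i - w j) ^ 2 := by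
    intro i j
    set a := min (i:ℕ) (j:ℕ)
    set b := max (i:ℕ) (j:ℕ)
    have hb : b ≤ n - 1 := by
      have := i.isLt; have := j.isLt; omega
    have hfilter : Finset.filter (fun l => a ≤ l ∧ l < b) (range (n-1)) = Ico a b := by
      ext l
      simp only [Finset.mem_filter, Finset.mem_range, Finset.mem_Ico]
      omega
    rw [Finset.sum_ite, Finset.sum_const_zero, add_zero, hfilter]
    have hab : a ≤ b := min_le_max
    have h1 : ∑ l ∈ Ico a b, (v (l+1) - v l) ^ 2 ≤ (∑ l ∈ Ico a b, (v (l+1) - v l)) ^ 2 :=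
      sum_sq_le_sq' _ _ (fun l _ => hgap_nonneg l)
    rw [htel a b hab] at h1
    have hvb : (v b - v a) ^ 2 = (w i - w j) ^ 2 := by
      rcases le_total (i:ℕ) (j:ℕ) with h | h
      · have ha' : a = (i:ℕ) := min_eq_left h
        have hb' : b = (j:ℕ) := max_eq_right h
        rw [ha', hb', hv i, hv j]; ring
      · have ha' : a = (j:ℕ) := min_eq_right h
        have hb' : b = (i:ℕ) := max_eq_left h
        rw [ha', hb', hv i, hv j]
    rw [hvb] at h1
    exact h1
  -- Step B preliminaries: the crossing weight of each cut is at least η/2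
  have hC_lb : ∀ l ∈ range (n-1), η / 2 ≤ ∑ i : Fin n, ∑ j : Fin n, (if (i:ℕ) ≤ l ∧ l < (j:ℕ) then μ i j else 0) := by
    intro l hl
    rw [Finset.mem_range] at hl
    have hCst : ∑ i : Fin n, ∑ j : Fin n, (if (i:ℕ) ≤ l ∧ l < (j:ℕ) then μ i j else 0)
        = ∑ k : Fin n, (∑ i : Fin n, (if (i:ℕ) ≤ l then A k (σ i) else 0))
            * (∑ j : Fin n, (if l < (j:ℕ) then A k (σ j) else 0)) := by
      calc ∑ i : Fin n, ∑ j : Fin n, (if (i:ℕ) ≤ l ∧ l < (j:ℕ) then μ i j else 0)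
          = ∑ i : Fin n, ∑ j : Fin n, ∑ k : Fin n, (if (i:ℕ) ≤ l then A k (σ i) else 0)
              * (if l < (j:ℕ) then A k (σ j) else 0) := by
            refine Finset.sum_congr rfl fun i _ => Finset.sum_congr rfl fun j _ => ?_
            by_cases h1 : (i:ℕ) ≤ l <;> by_cases h2 : l < (j:ℕ) <;>
              simp [h1, h2, hμdef, hMdef]
        _ = ∑ i : Fin n, ∑ k : Fin n, ∑ j : Fin n, (if (i:ℕ) ≤ l then A k (σ i) else 0)
              * (if l < (j:ℕ) then A k (σ j) else 0) :=
            Finset.sum_congr rfl fun i _ => Finset.sum_comm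
        _ = ∑ k : Fin n, ∑ i : Fin n, ∑ j : Fin n, (if (i:ℕ) ≤ l then A k (σ i) else 0)
              * (if l < (j:ℕ) then A k (σ j) else 0) := Finset.sum_comm
        _ = ∑ k : Fin n, (∑ i : Fin n, (if (i:ℕ) ≤ l then A k (σ i) else 0))
              * (∑ j : Fin n, (if l < (j:ℕ) then A k (σ j) else 0)) :=
            Finset.sum_congr rfl fun k _ => (Finset.sum_mul_sum _ _ _ _).symm
    rw [hCst]
    -- find a crossing edge
    obtain ⟨a, b, hPa, hPb, hEab⟩ := crossing hE_conn (fun k => ((σ.symm k : Fin n) : ℕ) ≤ l)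
      ⟨σ ⟨0, hn⟩, by simp⟩ ⟨σ ⟨n-1, by omega⟩, by simp; omega⟩
    have hita : ∀ k : Fin n, ∀ i : Fin n, i ∈ (univ : Finset (Fin n)) → (0:ℝ) ≤ (if (i:ℕ) ≤ l then A k (σ i) else 0) := by
      intro k i _
      by_cases h : (i:ℕ) ≤ l <;> simp [h, hA_nonneg]
    have hitb : ∀ k : Fin n, ∀ j : Fin n, j ∈ (univ : Finset (Fin n)) → (0:ℝ) ≤ (if l < (j:ℕ) then A k (σ j) else 0) := by
      intro k j _
      by_cases h : l < (j:ℕ) <;> simp [h, hA_nonneg]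
    have hsa : η ≤ ∑ i : Fin n, (if (i:ℕ) ≤ l then A a (σ i) else 0) := by
      have h1 : (if ((σ.symm a : Fin n) : ℕ) ≤ l then A a (σ (σ.symm a)) else 0) = A a a := by
        rw [if_pos hPa, Equiv.apply_symm_apply]
      calc η ≤ A a a := hη_le a a (hA_pos a a (hE_refl a)).1
        _ = _ := h1.symm
        _ ≤ _ := Finset.single_le_sum (hita a) (Finset.mem_univ (σ.symm a))
    have hta : η ≤ ∑ j : Fin n, (if l < (j:ℕ) then A a (σ j) else 0) := by
      have h1 : (if l < ((σ.symm b : Fin n) : ℕ) then A a (σ (σ.symm b)) else 0) = A a b := by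
        rw [if_pos (by omega), Equiv.apply_symm_apply]
      calc η ≤ A a b := hη_le a b (hA_pos a b hEab).1
        _ = _ := h1.symm
        _ ≤ _ := Finset.single_le_sum (hitb a) (Finset.mem_univ (σ.symm b))
    have hst : (∑ i : Fin n, (if (i:ℕ) ≤ l then A a (σ i) else 0))
        + (∑ j : Fin n, (if l < (j:ℕ) then A a (σ j) else 0)) = 1 := by
      rw [← Finset.sum_add_distrib]
      calc ∑ i : Fin n, ((if (i:ℕ) ≤ l then A a (σ i) else 0) + (if l < (i:ℕ) then A a (σ i) else 0))
          = ∑ i : Fin n, A a (σ i) := by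
            refine Finset.sum_congr rfl fun i _ => ?_
            by_cases h : (i:ℕ) ≤ l
            · rw [if_pos h, if_neg (by omega), add_zero]
            · rw [if_neg h, if_pos (by omega), zero_add]
        _ = 1 := by rw [Equiv.sum_comp σ (A a)]; exact hA_row a
    have hab : a ≠ b := by
      intro h; rw [h] at hPa; exact absurd hPa hPb
    have hη_half : 2 * η ≤ 1 := by
      have h2 : A a a + A a b ≤ ∑ j : Fin n, A a j := by
        have h3 := Finset.sum_le_sum_of_subset_of_nonneg (Finset.subset_univ {a, b})
          (fun i _ _ => hA_nonneg a i)
        rwa [Finset.sum_pair hab] at h3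
      rw [hA_row a] at h2
      have h4 := hη_le a a (hA_pos a a (hE_refl a)).1
      have h5 := hη_le a b (hA_pos a b hEab).1
      linarith
    have hsingle : (∑ i : Fin n, (if (i:ℕ) ≤ l then A a (σ i) else 0))
          * (∑ j : Fin n, (if l < (j:ℕ) then A a (σ j) else 0))
        ≤ ∑ k : Fin n, (∑ i : Fin n, (if (i:ℕ) ≤ l then A k (σ i) else 0))
            * (∑ j : Fin n, (if l < (j:ℕ) then A k (σ j) else 0)) :=
      Finset.single_le_sum (fun k _ => mul_nonneg
        (Finset.sum_nonneg (hita k)) (Finset.sum_nonneg (hitb k))) (Finset.mem_univ a)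
    refine le_trans ?_ hsingle
    nlinarith [mul_nonneg (sub_nonneg.mpr hsa) (sub_nonneg.mpr hta)]
  -- splitting the symmetric crossing condition
  have hsplit : ∀ (l : ℕ) (i j : Fin n),
      (if min (i:ℕ) (j:ℕ) ≤ l ∧ l < max (i:ℕ) (j:ℕ) then μ i j else 0)
      = (if (i:ℕ) ≤ l ∧ l < (j:ℕ) then μ i j else 0)
        + (if (j:ℕ) ≤ l ∧ l < (i:ℕ) then μ i j else 0) := by
    intro l i j
    by_cases h1 : (i:ℕ) ≤ l ∧ l < (j:ℕ) <;> by_cases h2 : (j:ℕ) ≤ l ∧ l < (i:ℕ)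
    · exfalso; omega
    · rw [if_pos h1, if_neg h2, if_pos (by omega), add_zero]
    · rw [if_neg h1, if_pos h2, if_pos (by omega), zero_add]
    · rw [if_neg h1, if_neg h2, if_neg (by omega), add_zero]
  have hCalt : ∀ l : ℕ, ∑ i : Fin n, ∑ j : Fin n, (if (j:ℕ) ≤ l ∧ l < (i:ℕ) then μ i j else 0)
      = ∑ i : Fin n, ∑ j : Fin n, (if (i:ℕ) ≤ l ∧ l < (j:ℕ) then μ i j else 0) := by
    intro l
    rw [Finset.sum_comm]
    exact Finset.sum_congr rfl fun p _ => Finset.sum_congr rfl fun q _ => by rw [hμ_symm]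
  have hcut : ∀ l : ℕ,
      ∑ i : Fin n, ∑ j : Fin n, (if min (i:ℕ) (j:ℕ) ≤ l ∧ l < max (i:ℕ) (j:ℕ) then μ i j else 0)
      = 2 * ∑ i : Fin n, ∑ j : Fin n, (if (i:ℕ) ≤ l ∧ l < (j:ℕ) then μ i j else 0) := by
    intro l
    calc ∑ i : Fin n, ∑ j : Fin n, (if min (i:ℕ) (j:ℕ) ≤ l ∧ l < max (i:ℕ) (j:ℕ) then μ i j else 0)
        = ∑ i : Fin n, ∑ j : Fin n, ((if (i:ℕ) ≤ l ∧ l < (j:ℕ) then μ i j else 0)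
            + (if (j:ℕ) ≤ l ∧ l < (i:ℕ) then μ i j else 0)) :=
          Finset.sum_congr rfl fun i _ => Finset.sum_congr rfl fun j _ => hsplit l i j
      _ = (∑ i : Fin n, ∑ j : Fin n, (if (i:ℕ) ≤ l ∧ l < (j:ℕ) then μ i j else 0))
            + ∑ i : Fin n, ∑ j : Fin n, (if (j:ℕ) ≤ l ∧ l < (i:ℕ) then μ i j else 0) := by
          simp [Finset.sum_add_distrib]
      _ = 2 * ∑ i : Fin n, ∑ j : Fin n, (if (i:ℕ) ≤ l ∧ l < (j:ℕ) then μ i j else 0) := by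
          rw [hCalt l]; ring
  -- Step B : η * G ≤ D
  have stepB : η * G ≤ D := by
    have key1 : ∀ l ∈ range (n-1),
        η * (v (l+1) - v l) ^ 2 ≤ ∑ i : Fin n, ∑ j : Fin n,
          (if min (i:ℕ) (j:ℕ) ≤ l ∧ l < max (i:ℕ) (j:ℕ)
            then μ i j * (v (l+1) - v l) ^ 2 else 0) := by
      intro l hl
      have e1 : ∑ i : Fin n, ∑ j : Fin n,
          (if min (i:ℕ) (j:ℕ) ≤ l ∧ l < max (i:ℕ) (j:ℕ) then μ i j * (v (l+1) - v l) ^ 2 else 0)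
          = (∑ i : Fin n, ∑ j : Fin n,
              (if min (i:ℕ) (j:ℕ) ≤ l ∧ l < max (i:ℕ) (j:ℕ) then μ i j else 0))
            * (v (l+1) - v l) ^ 2 := by
        rw [Finset.sum_mul]
        refine Finset.sum_congr rfl fun i _ => ?_
        rw [Finset.sum_mul]
        refine Finset.sum_congr rfl fun j _ => ?_
        rw [ite_mul, zero_mul]
      rw [e1, hcut l]
      have h2 := hC_lb l hl
      have hg := sq_nonneg (v (l+1) - v l)
      nlinarith
    calc η * G = ∑ l ∈ range (n-1), η * (v (l+1) - v l) ^ 2 := by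
          rw [hGdef, Finset.mul_sum]
      _ ≤ ∑ l ∈ range (n-1), ∑ i : Fin n, ∑ j : Fin n,
            (if min (i:ℕ) (j:ℕ) ≤ l ∧ l < max (i:ℕ) (j:ℕ)
              then μ i j * (v (l+1) - v l) ^ 2 else 0) := Finset.sum_le_sum key1
      _ = ∑ i : Fin n, ∑ l ∈ range (n-1), ∑ j : Fin n,
            (if min (i:ℕ) (j:ℕ) ≤ l ∧ l < max (i:ℕ) (j:ℕ)
              then μ i j * (v (l+1) - v l) ^ 2 else 0) := Finset.sum_comm
      _ = ∑ i : Fin n, ∑ j : Fin n, ∑ l ∈ range (n-1),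
            (if min (i:ℕ) (j:ℕ) ≤ l ∧ l < max (i:ℕ) (j:ℕ)
              then μ i j * (v (l+1) - v l) ^ 2 else 0) :=
          Finset.sum_congr rfl fun i _ => Finset.sum_comm
      _ ≤ ∑ i : Fin n, ∑ j : Fin n, μ i j * (w i - w j) ^ 2 := by
          refine Finset.sum_le_sum fun i _ => Finset.sum_le_sum fun j _ => ?_
          have e2 : ∑ l ∈ range (n-1),
              (if min (i:ℕ) (j:ℕ) ≤ l ∧ l < max (i:ℕ) (j:ℕ)
                then μ i j * (v (l+1) - v l) ^ 2 else 0)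
              = μ i j * ∑ l ∈ range (n-1),
                (if min (i:ℕ) (j:ℕ) ≤ l ∧ l < max (i:ℕ) (j:ℕ)
                  then (v (l+1) - v l) ^ 2 else 0) := by
            rw [Finset.mul_sum]
            exact Finset.sum_congr rfl fun l _ => by rw [mul_ite, mul_zero]
          rw [e2]
          exact mul_le_mul_of_nonneg_left (stepA i j) (hμ_nonneg i j)
      _ = D := hDdef.symm
  -- Step C : ∑ y² ≤ n * (w_top - w_bot)²
  have hbot : w ⟨0, hn⟩ ≤ 0 := by
    have h1 : (Finset.univ : Finset (Fin n)).card • w ⟨0, hn⟩ ≤ ∑ i, w i :=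
      Finset.card_nsmul_le_sum univ w _ (fun i _ => hw_mono (by simp [Fin.le_def]))
    rw [hwsum, Finset.card_univ, Fintype.card_fin, nsmul_eq_mul] at h1
    have hn' : (0:ℝ) < n := by positivity
    nlinarith
  have htop : 0 ≤ w ⟨n-1, by omega⟩ := by
    have h1 : ∑ i, w i ≤ (Finset.univ : Finset (Fin n)).card • w ⟨n-1, by omega⟩ :=
      Finset.sum_le_card_nsmul univ w _ (fun i _ => hw_mono (by
        simp [Fin.le_def]; omega))
    rw [hwsum, Finset.card_univ, Fintype.card_fin, nsmul_eq_mul] at h1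
    have hn' : (0:ℝ) < n := by positivity
    nlinarith
  have stepC : ∑ i, y i ^ 2 ≤ (n : ℝ) * (w ⟨n-1, by omega⟩ - w ⟨0, hn⟩) ^ 2 := by
    rw [← hwsq]
    have hrange : ∀ i : Fin n, w i ^ 2 ≤ (w ⟨n-1, by omega⟩ - w ⟨0, hn⟩) ^ 2 := by
      intro i
      have h1 : w ⟨0, hn⟩ ≤ w i := hw_mono (by simp [Fin.le_def])
      have h2 : w i ≤ w ⟨n-1, by omega⟩ := hw_mono (by
        simp [Fin.le_def]; have := i.isLt; omega)
      nlinarith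
    calc ∑ i, w i ^ 2 ≤ ∑ _i : Fin n, (w ⟨n-1, by omega⟩ - w ⟨0, hn⟩) ^ 2 :=
          Finset.sum_le_sum (fun i _ => hrange i)
      _ = (n : ℝ) * (w ⟨n-1, by omega⟩ - w ⟨0, hn⟩) ^ 2 := by
          rw [Finset.sum_const, Finset.card_univ, Fintype.card_fin, nsmul_eq_mul]
  -- Step D : (w_top - w_bot)² ≤ (n-1) * G
  have stepD : (w ⟨n-1, by omega⟩ - w ⟨0, hn⟩) ^ 2 ≤ ((n-1 : ℕ) : ℝ) * G := by
    have e0 : v 0 = w ⟨0, hn⟩ := by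
      show w ⟨min 0 (n-1), by omega⟩ = w ⟨0, hn⟩
      congr 1
    have e1 : v (n-1) = w ⟨n-1, by omega⟩ := by
      show w ⟨min (n-1) (n-1), by omega⟩ = w ⟨n-1, by omega⟩
      congr 1
      apply Fin.ext
      show min (n-1) (n-1) = n-1
      omega
    have h1 : w ⟨n-1, by omega⟩ - w ⟨0, hn⟩ = ∑ l ∈ range (n-1), (v (l+1) - v l) := by
      rw [Finset.sum_range_sub v (n-1), e0, e1]
    rw [h1, hGdef]
    have h2 := Finset.sum_mul_sq_le_sq_mul_sq (range (n-1)) (fun _ => (1:ℝ))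
      (fun l => v (l+1) - v l)
    simp only [one_mul, one_pow] at h2
    rw [Finset.sum_const, Finset.card_range, nsmul_eq_mul, mul_one] at h2
    exact h2
  -- assemble
  have hd1 : η * ∑ i, y i ^ 2 ≤ (n : ℝ) ^ 2 * D := by
    have c1 : (0:ℝ) ≤ (n:ℝ) := by positivity
    have c2 : ((n-1:ℕ):ℝ) ≤ (n:ℝ) := by
      exact_mod_cast Nat.sub_le n 1
    have c3 : (0:ℝ) ≤ ((n-1:ℕ):ℝ) := by positivity
    calc η * ∑ i, y i ^ 2
        ≤ η * ((n:ℝ) * (w ⟨n-1, by omega⟩ - w ⟨0, hn⟩) ^ 2) :=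
          mul_le_mul_of_nonneg_left stepC hη_pos.le
      _ ≤ η * ((n:ℝ) * (((n-1:ℕ):ℝ) * G)) :=
          mul_le_mul_of_nonneg_left (mul_le_mul_of_nonneg_left stepD c1) hη_pos.le
      _ = (n:ℝ) * ((n-1:ℕ):ℝ) * (η * G) := by ring
      _ ≤ (n:ℝ) * ((n-1:ℕ):ℝ) * D :=
          mul_le_mul_of_nonneg_left stepB (by positivity)
      _ ≤ (n:ℝ) ^ 2 * D := by
          have h3 : (n:ℝ) * ((n-1:ℕ):ℝ) ≤ (n:ℝ) ^ 2 := by nlinarith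
          exact mul_le_mul_of_nonneg_right h3 hD_nonneg
  have hD2 : ∑ i, ∑ j, M i j * y i * y j = (∑ i, y i ^ 2) - D / 2 := by
    have h4 := hD
    rw [← hDσ] at h4
    linarith
  rw [hAy, hD2]
  have hn2 : (0:ℝ) < (n:ℝ) ^ 2 := by positivity
  have h5 : η / (2 * (n:ℝ) ^ 2) * (∑ i, y i ^ 2) ≤ D / 2 := by
    rw [div_mul_eq_mul_div, div_le_div_iff₀ (by positivity) (by norm_num : (0:ℝ) < 2)]
    nlinarith [hd1]
  have expand : (1 - η / (2 * (n:ℝ) ^ 2)) * ∑ i, y i ^ 2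
      = (∑ i, y i ^ 2) - η / (2 * (n:ℝ) ^ 2) * ∑ i, y i ^ 2 := by ring
  rw [expand]
  linarith



/-- Convergence time of the consensus iteration: with `η` the smallest
positive entry of the doubly stochastic matrix `A`, the squared error
`E(t) = ‖x(t) - x̄ 1‖₂²` contracts as `E(t) ≤ (1 - η/(2n²))ᵗ E(0)`. -/
theorem consensus_contraction
    (n : ℕ) (hn : 0 < n)
    (E : Fin n → Fin n → Prop)
    (hE_symm : ∀ i j, E i j → E j i)
    (hE_refl : ∀ i, E i i)
    (hE_conn : ∀ i j, Relation.ReflTransGen E i j)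
    (A : Matrix (Fin n) (Fin n) ℝ)
    (hA_nonneg : ∀ i j, 0 ≤ A i j)
    (hA_row : ∀ i, ∑ j, A i j = 1)
    (hA_col : ∀ j, ∑ i, A i j = 1)
    (hA_pos : ∀ i j, E i j → 0 < A i j ∧ 0 < A j i)
    (η : ℝ)
    (hη : IsLeast {a : ℝ | 0 < a ∧ ∃ i j, A i j = a} η)
    (x : ℕ → Fin n → ℝ)
    (hx : ∀ t, x (t + 1) = A.mulVec (x t))
    (xbar : ℝ) (hxbar : xbar = (∑ j, x 0 j) / n)
    (Esq : ℕ → ℝ) (hEsq : ∀ t, Esq t = ∑ i, (x t i - xbar) ^ 2) :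
    ∀ t : ℕ, Esq t ≤ (1 - η / (2 * n ^ 2)) ^ t * Esq 0 := by
  have hη_pos : 0 < η := hη.1.1
  have hη_le1 : η ≤ 1 := by
    obtain ⟨⟨hpos, i, j, hij⟩, _⟩ := hη
    have h1 : A i j ≤ ∑ j', A i j' :=
      Finset.single_le_sum (fun k _ => hA_nonneg i k) (Finset.mem_univ j)
    rw [hA_row i] at h1
    linarith [hij ▸ h1]
  have hn1 : (1:ℝ) ≤ (n:ℝ) := by exact_mod_cast hn
  have hc_nonneg : 0 ≤ 1 - η / (2 * (n:ℝ) ^ 2) := by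
    have h2 : η / (2 * (n:ℝ) ^ 2) ≤ 1 := by
      rw [div_le_one (by positivity)]
      nlinarith
    linarith
  -- the sum of x t is constant
  have hxsum : ∀ t, ∑ i, x t i = ∑ i, x 0 i := by
    intro t
    induction t with
    | zero => rfl
    | succ t ih =>
      rw [hx t]
      calc ∑ i, A.mulVec (x t) i = ∑ i : Fin n, ∑ j : Fin n, A i j * x t j := by
            refine Finset.sum_congr rfl fun i _ => ?_
            simp [Matrix.mulVec, dotProduct]
        _ = ∑ j : Fin n, ∑ i : Fin n, A i j * x t j := Finset.sum_comm
        _ = ∑ j, x t j := by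
            refine Finset.sum_congr rfl fun j _ => ?_
            rw [← Finset.sum_mul, hA_col j, one_mul]
        _ = ∑ i, x 0 i := ih
  have hysum : ∀ t, ∑ i, (x t i - xbar) = 0 := by
    intro t
    rw [Finset.sum_sub_distrib, hxsum t, Finset.sum_const, Finset.card_univ,
      Fintype.card_fin, nsmul_eq_mul, hxbar]
    have hn' : (n:ℝ) ≠ 0 := by positivity
    field_simp
    ring
  have hAV : ∀ t (i : Fin n), A.mulVec (fun j => x t j - xbar) i = x (t+1) i - xbar := by
    intro t i
    show ∑ j, A i j * (x t j - xbar) = x (t+1) i - xbar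
    rw [hx t]
    show ∑ j, A i j * (x t j - xbar) = (∑ j, A i j * x t j) - xbar
    calc ∑ j, A i j * (x t j - xbar)
        = (∑ j, A i j * x t j) - (∑ j, A i j) * xbar := by
          simp only [mul_sub]
          rw [Finset.sum_sub_distrib, Finset.sum_mul]
      _ = (∑ j, A i j * x t j) - xbar := by rw [hA_row i, one_mul]
  intro t
  induction t with
  | zero => simp
  | succ t ih =>
    have hstep : Esq (t+1) ≤ (1 - η / (2 * (n:ℝ) ^ 2)) * Esq t := by
      rw [hEsq (t+1), hEsq t]
      have hkey := key_contraction n hn E hE_refl hE_conn A hA_nonneg hA_row hA_col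
        hA_pos η hη (fun i => x t i - xbar) (hysum t)
      calc ∑ i, (x (t+1) i - xbar) ^ 2
          = ∑ k, (A.mulVec (fun j => x t j - xbar) k) ^ 2 := by
            refine Finset.sum_congr rfl fun i _ => ?_
            rw [hAV t i]
        _ ≤ (1 - η / (2 * (n:ℝ) ^ 2)) * ∑ i, (x t i - xbar) ^ 2 := hkey
    calc Esq (t+1) ≤ (1 - η / (2 * (n:ℝ) ^ 2)) * Esq t := hstep
      _ ≤ (1 - η / (2 * (n:ℝ) ^ 2)) * ((1 - η / (2 * (n:ℝ) ^ 2)) ^ t * Esq 0) :=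
          mul_le_mul_of_nonneg_left ih hc_nonneg
      _ = (1 - η / (2 * (n:ℝ) ^ 2)) ^ (t+1) * Esq 0 := by ring
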